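/- Fix ε ∈ (0,1/2) and let α ∈ (0,1) be such that α(1−α)² = 2ε. Then for every sufficiently large finite set 𝒳 there exists a joint distribution p_{XYMN} over 𝒳×𝒳×𝒳×𝒳 such that: Y = X (p puts mass only on tuples with y = x); M and N are conditionally independent given X (p(x,x,m,n) = p_X(x)·p_{M|X=x}(m)·p_{N|X=x}(n)); the entropy satisfies H(M,N) ≤ (1−α³)·log|𝒳| + 3; every real c' satisfying Pr_{(x,y,m,n)~p}[ (p_{M|X=x}(m)·p_{N|Y=y}(n))/p_{MN}(m,n) ≤ 2^{c'} ] ≥ 1−ε satisfies c' ≥ log|𝒳| − 3; and consequently every such c' satisfies H(M,N)/c' ≤ 7√ε. -/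
import Mathlib


open Finset Real
open scoped Classical

noncomputable section

/-- Marginal on `X` of a joint distribution on `𝒳⁴` (coordinates `(x, y, m, n)`). -/
def margX4 {𝒳 : Type*} [Fintype 𝒳] (p : 𝒳 → 𝒳 → 𝒳 → 𝒳 → ℝ) (x : 𝒳) : ℝ :=
  ∑ y, ∑ m, ∑ n, p x y m n

/-- Marginal on `Y`. -/
def margY4 {𝒳 : Type*} [Fintype 𝒳] (p : 𝒳 → 𝒳 → 𝒳 → 𝒳 → ℝ) (y : 𝒳) : ℝ :=
  ∑ x, ∑ m, ∑ n, p x y m n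

/-- Marginal on `(X, M)`. -/
def margXM4 {𝒳 : Type*} [Fintype 𝒳] (p : 𝒳 → 𝒳 → 𝒳 → 𝒳 → ℝ) (x m : 𝒳) : ℝ :=
  ∑ y, ∑ n, p x y m n

/-- Marginal on `(Y, N)`. -/
def margYN4 {𝒳 : Type*} [Fintype 𝒳] (p : 𝒳 → 𝒳 → 𝒳 → 𝒳 → ℝ) (y n : 𝒳) : ℝ :=
  ∑ x, ∑ m, p x y m n

/-- Marginal on `(X, N)`. -/
def margXN4 {𝒳 : Type*} [Fintype 𝒳] (p : 𝒳 → 𝒳 → 𝒳 → 𝒳 → ℝ) (x n : 𝒳) : ℝ :=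
  ∑ y, ∑ m, p x y m n

/-- Marginal on `(M, N)`. -/
def margMN4 {𝒳 : Type*} [Fintype 𝒳] (p : 𝒳 → 𝒳 → 𝒳 → 𝒳 → ℝ) (m n : 𝒳) : ℝ :=
  ∑ x, ∑ y, p x y m n

/-- Entropy `H(M,N)` (base-2 logarithms). -/
def entMN4 {𝒳 : Type*} [Fintype 𝒳] (p : 𝒳 → 𝒳 → 𝒳 → 𝒳 → ℝ) : ℝ :=
  -∑ m, ∑ n, margMN4 p m n * logb 2 (margMN4 p m n)

namespace CEaux

def GG (t : ℝ) : ℝ := t * logb 2 t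

lemma neg_GG_le (t : ℝ) (ht : 0 ≤ t) : -(GG t) ≤ 3/4 := by
  unfold GG
  rcases ht.eq_or_lt with h | h
  · norm_num [← h]
  · have he : (0:ℝ) < Real.exp 1 := Real.exp_pos 1
    have h1 : Real.log ((Real.exp 1 * t)⁻¹) ≤ (Real.exp 1 * t)⁻¹ - 1 :=
      Real.log_le_sub_one_of_pos (by positivity)
    rw [Real.log_inv, Real.log_mul (ne_of_gt he) (ne_of_gt h), Real.log_exp, mul_inv] at h1
    have h4 : t * t⁻¹ = 1 := mul_inv_cancel₀ (ne_of_gt h)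
    have h2 : -(t * Real.log t) ≤ (Real.exp 1)⁻¹ := by
      have h6 := mul_le_mul_of_nonneg_left h1 h.le
      have h7 : t * ((Real.exp 1)⁻¹ * t⁻¹ - 1) = (Real.exp 1)⁻¹ - t := by
        rw [mul_sub, mul_one, show t * ((Real.exp 1)⁻¹ * t⁻¹) = (Real.exp 1)⁻¹ * (t * t⁻¹) by ring,
          h4, mul_one]
      rw [h7] at h6
      nlinarith [h6]
    have hlog2 : (0.6931471803 : ℝ) < Real.log 2 := Real.log_two_gt_d9
    have hexp : (2.7182818283 : ℝ) < Real.exp 1 := Real.exp_one_gt_d9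
    have h5 : (Real.exp 1)⁻¹ < 0.37 := by
      rw [inv_lt_comm₀ he (by norm_num)]
      nlinarith
    rw [Real.logb, show t * (Real.log t / Real.log 2) = (t * Real.log t) / Real.log 2 by ring,
      ← neg_div, div_le_iff₀ (by linarith : (0:ℝ) < Real.log 2)]
    nlinarith

lemma neg_GG_nonneg (t : ℝ) (h0 : 0 ≤ t) (h1 : t ≤ 1) : 0 ≤ -(GG t) := by
  unfold GG
  have hl : Real.logb 2 t ≤ 0 := Real.logb_nonpos (by norm_num) h0 h1
  nlinarith

lemma poly_ineq (s a : ℝ) (hs0 : 0 ≤ s) (hsa : s^2 = a) (ha1 : a ≤ 1) :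
    2*(s*(1-a)) - (s*(1-a))^2 ≤ 1 - a^3 := by
  subst hsa
  nlinarith [mul_nonneg (sq_nonneg (1 - s)) (by nlinarith : (0:ℝ) ≤ 1 - s^2),
    mul_nonneg (pow_nonneg hs0 4) (by nlinarith : (0:ℝ) ≤ 1 - s^2),
    sq_nonneg (s * (1 - s^2))]

lemma GG_term (n c : ℝ) (hn : 1 ≤ n) (hc0 : 0 < c) (hc1 : c ≤ 1) :
    (n-1) * (-(GG (n⁻¹ * c))) ≤ c * Real.logb 2 n + 3/4 := by
  have hn0 : (0:ℝ) < n := by linarith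
  have hlb : Real.logb 2 (n⁻¹ * c) = Real.logb 2 c - Real.logb 2 n := by
    rw [Real.logb_mul (inv_ne_zero hn0.ne') hc0.ne', Real.logb_inv]; ring
  have h1 : 0 ≤ Real.logb 2 n := Real.logb_nonneg (by norm_num) hn
  have h2 : 0 ≤ -(c * Real.logb 2 c) := neg_GG_nonneg c hc0.le hc1
  have h3 : -(c * Real.logb 2 c) ≤ 3/4 := neg_GG_le c hc0.le
  have hnn : n * n⁻¹ = 1 := mul_inv_cancel₀ hn0.ne'
  have hinv0 : 0 ≤ n⁻¹ := inv_nonneg.2 hn0.le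
  have h4 : (n-1) * n⁻¹ ≤ 1 := by nlinarith
  have h5 : 0 ≤ (n-1) * n⁻¹ := mul_nonneg (by linarith) hinv0
  have hX : 0 ≤ c * Real.logb 2 n + (-(c * Real.logb 2 c)) :=
    add_nonneg (mul_nonneg hc0.le h1) h2
  have key : (n-1) * (-(GG (n⁻¹ * c)))
      = ((n-1) * n⁻¹) * (c * Real.logb 2 n + (-(c * Real.logb 2 c))) := by
    unfold GG; rw [hlb]; ring
  rw [key]
  nlinarith [mul_le_mul_of_nonneg_right h4 hX]

variable (N : ℕ) [NeZero N] (β : ℝ)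

def qq (x m : Fin N) : ℝ := (if m = x then β else 0) + (if m = 0 then 1 - β else 0)
def PP (x y m n : Fin N) : ℝ := if y = x then (N:ℝ)⁻¹ * (qq N β x m * qq N β x n) else 0
def SS (m n : Fin N) : ℝ := ∑ x, qq N β x m * qq N β x n
def AA : ℝ := (N:ℝ)⁻¹ * (1 + ((N:ℝ)-1) * (1-β)^2)
def BB : ℝ := (N:ℝ)⁻¹ * (β * (1-β))
def CC : ℝ := (N:ℝ)⁻¹ * (β * β)
def DD (x y m n : Fin N) : ℝ :=
  if y = x then if m = x then if n = x then
    (if x = 0 then 0 else (N:ℝ)⁻¹ * (β * β)) else 0 else 0 else 0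

lemma sum_qq (x : Fin N) : ∑ m, qq N β x m = 1 := by
  simp [qq, Finset.sum_add_distrib, Finset.sum_ite_eq']

lemma qq_nonneg (hβ0 : 0 ≤ β) (hβ1 : β ≤ 1) (x m : Fin N) : 0 ≤ qq N β x m := by
  unfold qq
  have h1 : (0:ℝ) ≤ (if m = x then β else 0) := by split <;> simp [hβ0]
  have h2 : (0:ℝ) ≤ (if m = 0 then 1 - β else 0) := by split <;> simp [hβ1]
  linarith

lemma PP_nonneg (hβ0 : 0 ≤ β) (hβ1 : β ≤ 1) (x y m n : Fin N) : 0 ≤ PP N β x y m n := by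
  unfold PP; split
  · have h1 := qq_nonneg N β hβ0 hβ1 x m
    have h2 := qq_nonneg N β hβ0 hβ1 x n
    positivity
  · exact le_refl 0

lemma sum_if_zero (a b : ℝ) : ∑ x : Fin N, (if x = 0 then a else b) = a + ((N:ℝ) - 1) * b := by
  have h : ∀ x : Fin N, (if x = 0 then a else b) = (if x = 0 then a - b else 0) + b := by
    intro x; split <;> ring
  rw [Finset.sum_congr rfl fun x _ => h x, Finset.sum_add_distrib, Finset.sum_ite_eq',
    Finset.sum_const]
  simp
  ring

lemma margX4_eq (x : Fin N) : margX4 (PP N β) x = (N:ℝ)⁻¹ := by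
  unfold margX4
  have h : ∀ y : Fin N, (∑ m, ∑ n, PP N β x y m n) = if y = x then (N:ℝ)⁻¹ else 0 := by
    intro y
    by_cases h : y = x
    · simp only [PP, if_pos h]
      rw [show (∑ m, ∑ n, (N:ℝ)⁻¹ * (qq N β x m * qq N β x n))
          = (N:ℝ)⁻¹ * ((∑ m, qq N β x m) * (∑ n, qq N β x n)) by
        rw [Finset.sum_mul_sum, Finset.mul_sum]
        exact Finset.sum_congr rfl fun m _ => by rw [Finset.mul_sum]]
      simp [sum_qq]
    · simp [PP, h]
  rw [Finset.sum_congr rfl fun y _ => h y, Finset.sum_ite_eq']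
  simp

lemma margXM4_eq (x m : Fin N) : margXM4 (PP N β) x m = (N:ℝ)⁻¹ * qq N β x m := by
  unfold margXM4
  have h : ∀ y : Fin N, (∑ n, PP N β x y m n) = if y = x then (N:ℝ)⁻¹ * qq N β x m else 0 := by
    intro y
    by_cases h : y = x
    · simp only [PP, if_pos h]
      rw [show (∑ n, (N:ℝ)⁻¹ * (qq N β x m * qq N β x n))
          = (N:ℝ)⁻¹ * qq N β x m * (∑ n, qq N β x n) by
        rw [Finset.mul_sum]; exact Finset.sum_congr rfl fun i _ => by ring]
      simp [sum_qq]
    · simp [PP, h]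
  rw [Finset.sum_congr rfl fun y _ => h y, Finset.sum_ite_eq']
  simp

lemma margXN4_eq (x n : Fin N) : margXN4 (PP N β) x n = (N:ℝ)⁻¹ * qq N β x n := by
  unfold margXN4
  have h : ∀ y : Fin N, (∑ m, PP N β x y m n) = if y = x then (N:ℝ)⁻¹ * qq N β x n else 0 := by
    intro y
    by_cases h : y = x
    · simp only [PP, if_pos h]
      rw [show (∑ m, (N:ℝ)⁻¹ * (qq N β x m * qq N β x n))
          = (N:ℝ)⁻¹ * qq N β x n * (∑ m, qq N β x m) by
        rw [Finset.mul_sum]; exact Finset.sum_congr rfl fun i _ => by ring]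
      simp [sum_qq]
    · simp [PP, h]
  rw [Finset.sum_congr rfl fun y _ => h y, Finset.sum_ite_eq']
  simp

lemma margY4_eq (y : Fin N) : margY4 (PP N β) y = (N:ℝ)⁻¹ := by
  unfold margY4
  have h : ∀ x : Fin N, (∑ m, ∑ n, PP N β x y m n) = if y = x then (N:ℝ)⁻¹ else 0 := by
    intro x
    by_cases h : y = x
    · simp only [PP, if_pos h]
      rw [show (∑ m, ∑ n, (N:ℝ)⁻¹ * (qq N β x m * qq N β x n))
          = (N:ℝ)⁻¹ * ((∑ m, qq N β x m) * (∑ n, qq N β x n)) by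
        rw [Finset.sum_mul_sum, Finset.mul_sum]
        exact Finset.sum_congr rfl fun m _ => by rw [Finset.mul_sum]]
      simp [sum_qq]
    · simp [PP, h]
  rw [Finset.sum_congr rfl fun x _ => h x, Finset.sum_ite_eq]
  simp

lemma margYN4_eq (y n : Fin N) : margYN4 (PP N β) y n = (N:ℝ)⁻¹ * qq N β y n := by
  unfold margYN4
  have h : ∀ x : Fin N, (∑ m, PP N β x y m n) = if y = x then (N:ℝ)⁻¹ * qq N β x n else 0 := by
    intro x
    by_cases h : y = x
    · simp only [PP, if_pos h]
      rw [show (∑ m, (N:ℝ)⁻¹ * (qq N β x m * qq N β x n))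
          = (N:ℝ)⁻¹ * qq N β x n * (∑ m, qq N β x m) by
        rw [Finset.mul_sum]; exact Finset.sum_congr rfl fun i _ => by ring]
      simp [sum_qq]
    · simp [PP, h]
  rw [Finset.sum_congr rfl fun x _ => h x, Finset.sum_ite_eq]
  simp

lemma margMN4_eq (m n : Fin N) : margMN4 (PP N β) m n = (N:ℝ)⁻¹ * SS N β m n := by
  unfold margMN4 SS
  have h : ∀ x : Fin N, (∑ y, PP N β x y m n) = (N:ℝ)⁻¹ * (qq N β x m * qq N β x n) := by
    intro x
    simp only [PP]
    rw [Finset.sum_ite_eq']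
    simp
  rw [Finset.sum_congr rfl fun x _ => h x, ← Finset.mul_sum]

lemma SS_of_ne (m n : Fin N) (hm : m ≠ 0) : SS N β m n = β * qq N β m n := by
  unfold SS
  have h : ∀ x, qq N β x m * qq N β x n = if m = x then β * qq N β x n else 0 := by
    intro x
    by_cases hx : m = x
    · subst hx; simp only [qq, eq_self_iff_true, if_true, if_neg hm, add_zero]
    · simp [qq, hx, hm]
  rw [Finset.sum_congr rfl fun x _ => h x, Finset.sum_ite_eq]
  simp

lemma SS_zero_ne (n : Fin N) (hn : n ≠ 0) : SS N β 0 n = β * (1 - β) := by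
  unfold SS
  have h : ∀ x, qq N β x 0 * qq N β x n = if n = x then qq N β x 0 * β else 0 := by
    intro x
    by_cases hx : n = x
    · subst hx; simp only [qq, eq_self_iff_true, if_true, if_neg hn, add_zero]
    · simp [qq, hx, hn]
  rw [Finset.sum_congr rfl fun x _ => h x, Finset.sum_ite_eq]
  have h0 : ¬((0:Fin N) = n) := fun h => hn h.symm
  simp [qq, h0, hn]
  ring

lemma SS_zero_zero : SS N β 0 0 = 1 + ((N:ℝ)-1) * (1-β)^2 := by
  unfold SS
  have h : ∀ x : Fin N, qq N β x 0 * qq N β x 0 = if x = 0 then 1 else (1-β)^2 := by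
    intro x
    by_cases hx : x = 0
    · subst hx; simp [qq]
    · have h0 : ¬((0:Fin N) = x) := fun h => hx h.symm
      simp [qq, h0, hx]; ring
  rw [Finset.sum_congr rfl fun x _ => h x, sum_if_zero]

lemma margMN4_closed (m n : Fin N) : margMN4 (PP N β) m n =
    if m = 0 then (if n = 0 then AA N β else BB N β)
    else (if n = 0 then BB N β else if n = m then CC N β else 0) := by
  rw [margMN4_eq]
  by_cases hm : m = 0
  · subst hm
    by_cases hn : n = 0
    · subst hn; rw [SS_zero_zero]; simp [AA]
    · rw [SS_zero_ne _ _ _ hn]; simp [BB, hn]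
  · rw [SS_of_ne _ _ _ _ hm]
    by_cases hn : n = 0
    · subst hn
      have h0m : ¬((0:Fin N) = m) := fun h => hm h.symm
      have hq : qq N β m 0 = 1 - β := by
        simp [qq, h0m]
      rw [hq]; simp [BB, hm]
    · by_cases hnm : n = m
      · have hq : qq N β m n = β := by
          unfold qq; rw [if_pos hnm, if_neg hn]; ring
        rw [hq]; simp [CC, hm, hn, hnm]
      · have hq : qq N β m n = 0 := by
          simp [qq, hnm, hn]
        rw [hq]; simp [hm, hn, hnm]

lemma entMN4_PP : entMN4 (PP N β) =
    -(GG (AA N β)) - (2*((N:ℝ)-1)) * GG (BB N β) - ((N:ℝ)-1) * GG (CC N β) := by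
  unfold entMN4
  have hin : ∀ m : Fin N, (∑ n, margMN4 (PP N β) m n * logb 2 (margMN4 (PP N β) m n))
      = if m = 0 then GG (AA N β) + ((N:ℝ)-1) * GG (BB N β) else GG (BB N β) + GG (CC N β) := by
    intro m
    by_cases hm : m = 0
    · rw [if_pos hm]
      have h : ∀ n : Fin N, margMN4 (PP N β) m n * logb 2 (margMN4 (PP N β) m n)
          = if n = 0 then GG (AA N β) else GG (BB N β) := by
        intro n
        rw [margMN4_closed, if_pos hm]
        by_cases hn : n = 0 <;> simp [hn, GG]
      rw [Finset.sum_congr rfl fun n _ => h n, sum_if_zero]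
    · rw [if_neg hm]
      have h : ∀ n : Fin N, margMN4 (PP N β) m n * logb 2 (margMN4 (PP N β) m n)
          = (if n = 0 then GG (BB N β) else 0) + (if n = m then GG (CC N β) else 0) := by
        intro n
        rw [margMN4_closed, if_neg hm]
        by_cases hn : n = 0
        · have hx : ¬ n = m := by rw [hn]; exact fun h => hm h.symm
          rw [if_pos hn, if_pos hn, if_neg hx, add_zero]; rfl
        · by_cases hnm : n = m
          · rw [if_neg hn, if_pos hnm, if_neg hn, if_pos hnm, zero_add]; rfl
          · rw [if_neg hn, if_neg hnm, if_neg hn, if_neg hnm]; simp [GG]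
      rw [Finset.sum_congr rfl fun n _ => h n, Finset.sum_add_distrib,
        Finset.sum_ite_eq', Finset.sum_ite_eq']
      simp
  rw [Finset.sum_congr rfl fun m _ => hin m, sum_if_zero]
  ring

lemma sum_DD : (∑ x, ∑ y, ∑ m, ∑ n, DD N β x y m n) = ((N:ℝ)-1) * ((N:ℝ)⁻¹ * (β * β)) := by
  have h : ∀ x : Fin N, (∑ y, ∑ m, ∑ n, DD N β x y m n)
      = if x = 0 then 0 else (N:ℝ)⁻¹ * (β * β) := by
    intro x
    have hn : ∀ y m : Fin N, (∑ n, DD N β x y m n)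
        = if y = x then if m = x then (if x = 0 then 0 else (N:ℝ)⁻¹ * (β * β)) else 0 else 0 := by
      intro y m
      by_cases hy : y = x
      · by_cases hm : m = x
        · simp only [DD, if_pos hy, if_pos hm]
          rw [Finset.sum_ite_eq']; simp
        · simp [DD, hy, hm]
      · simp [DD, hy]
    have hm : ∀ y : Fin N, (∑ m, ∑ n, DD N β x y m n)
        = if y = x then (if x = 0 then 0 else (N:ℝ)⁻¹ * (β * β)) else 0 := by
      intro y
      rw [Finset.sum_congr rfl fun m _ => hn y m]
      by_cases hy : y = x
      · simp only [if_pos hy]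
        rw [Finset.sum_ite_eq']; simp
      · simp [hy]
    rw [Finset.sum_congr rfl fun y _ => hm y, Finset.sum_ite_eq']
    simp
  rw [Finset.sum_congr rfl fun x _ => h x, sum_if_zero]
  ring

end CEaux

set_option maxHeartbeats 1000000 in
/-- Claim 3.1, counterexample: fix `ε ∈ (0, 1/2)` and `α ∈ (0,1)`
with `α(1−α)² = 2ε`.  For every sufficiently large finite set `𝒳` (modelled as
`Fin N`) there is a joint distribution `p_{XYMN}` on `𝒳⁴` with `Y = X`, with `M, N`
conditionally independent given `X`, with `H(M,N) ≤ (1−α³) log|𝒳| + 3`, and such that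
every `c'` with `Pr[(p_{M|X=x}(m)·p_{N|Y=y}(n))/p_{MN}(m,n) ≤ 2^{c'}] ≥ 1−ε` satisfies
`c' ≥ log|𝒳| − 3`, and consequently `H(M,N)/c' ≤ 7√ε`. -/
theorem counterexample_entropy_ratio
    (ε : ℝ) (hε : ε ∈ Set.Ioo (0:ℝ) (1/2))
    (α : ℝ) (hα : α ∈ Set.Ioo (0:ℝ) 1) (hαε : α * (1 - α) ^ 2 = 2 * ε) :
    ∃ N₀ : ℕ, ∀ N : ℕ, N₀ ≤ N →
    ∃ p : Fin N → Fin N → Fin N → Fin N → ℝ,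
      (∀ x y m n, 0 ≤ p x y m n) ∧
      (∑ x, ∑ y, ∑ m, ∑ n, p x y m n) = 1 ∧
      -- `Y = X`
      (∀ x y m n, y ≠ x → p x y m n = 0) ∧
      -- `M` and `N` are conditionally independent given `X`
      (∀ x m n, 0 < margX4 p x →
        p x x m n = margX4 p x * (margXM4 p x m / margX4 p x) *
          (margXN4 p x n / margX4 p x)) ∧
      -- entropy upper bound
      entMN4 p ≤ (1 - α ^ 3) * logb 2 (N : ℝ) + 3 ∧
      -- every valid `c'` is large, hence the ratio `H(M,N)/c'` is small
      (∀ c' : ℝ,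
        (1 - ε ≤ ∑ x, ∑ y, ∑ m, ∑ n,
          (if (margXM4 p x m / margX4 p x) * (margYN4 p y n / margY4 p y) /
              margMN4 p m n ≤ (2 : ℝ) ^ c'
            then p x y m n else 0)) →
        (logb 2 (N : ℝ) - 3 ≤ c' ∧ entMN4 p / c' ≤ 7 * Real.sqrt ε)) := by
  obtain ⟨hε0, hε1⟩ := hε
  obtain ⟨hα0, hα1⟩ := hα
  have hsε : 0 < Real.sqrt ε := Real.sqrt_pos.2 hε0
  refine ⟨2 ^ (⌈3 / (4 * Real.sqrt ε)⌉₊) + 4, fun N hN => ?_⟩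
  have h2k : 1 ≤ 2 ^ (⌈3 / (4 * Real.sqrt ε)⌉₊) := Nat.one_le_two_pow
  have hN4 : 4 ≤ N := by omega
  haveI : NeZero N := ⟨by omega⟩
  have hn4 : (4:ℝ) ≤ (N:ℝ) := by exact_mod_cast hN4
  have hn1 : (1:ℝ) ≤ (N:ℝ) := by linarith
  have hn0 : (0:ℝ) < (N:ℝ) := by linarith
  set β := Real.sqrt (2*ε) with hβdef
  have hβsq : β^2 = 2*ε := Real.sq_sqrt (by linarith)
  have hβ0 : 0 < β := Real.sqrt_pos.2 (by linarith)
  have hβ1 : β < 1 := by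
    by_contra h
    push_neg at h
    nlinarith
  -- the key logarithmic lower bound on N
  have hL1 : 3 / (4 * Real.sqrt ε) ≤ Real.logb 2 (N:ℝ) := by
    have hk : (3 / (4 * Real.sqrt ε)) ≤ ((⌈3 / (4 * Real.sqrt ε)⌉₊ : ℕ) : ℝ) := Nat.le_ceil _
    have h2kN : ((2:ℝ) ^ (⌈3 / (4 * Real.sqrt ε)⌉₊ : ℕ)) ≤ (N:ℝ) := by
      have : (2 ^ (⌈3 / (4 * Real.sqrt ε)⌉₊ : ℕ) : ℕ) ≤ N := by omega
      exact_mod_cast this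
    have hlogpow : Real.logb 2 ((2:ℝ) ^ (⌈3 / (4 * Real.sqrt ε)⌉₊ : ℕ))
        = ((⌈3 / (4 * Real.sqrt ε)⌉₊ : ℕ) : ℝ) := by
      rw [Real.logb_pow]
      simp
    calc 3 / (4 * Real.sqrt ε) ≤ ((⌈3 / (4 * Real.sqrt ε)⌉₊ : ℕ) : ℝ) := hk
      _ = Real.logb 2 ((2:ℝ) ^ (⌈3 / (4 * Real.sqrt ε)⌉₊ : ℕ)) := hlogpow.symm
      _ ≤ Real.logb 2 (N:ℝ) := Real.logb_le_logb_of_le (by norm_num) (by positivity) h2kN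
  have hL0 : 0 < Real.logb 2 (N:ℝ) := lt_of_lt_of_le (by positivity) hL1
  -- total mass one
  have htot : (∑ x, ∑ y, ∑ m, ∑ n, CEaux.PP N β x y m n) = 1 := by
    have : (∑ x, ∑ y, ∑ m, ∑ n, CEaux.PP N β x y m n)
        = ∑ x : Fin N, margX4 (CEaux.PP N β) x := rfl
    rw [this, Finset.sum_congr rfl fun x _ => CEaux.margX4_eq N β x, Finset.sum_const,
      Finset.card_univ, Fintype.card_fin, nsmul_eq_mul]
    exact mul_inv_cancel₀ hn0.ne'
  -- entropy upper bound
  have hc1a : 0 < β * (1-β) := mul_pos hβ0 (by linarith)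
  have hc1b : β * (1-β) ≤ 1 := by nlinarith
  have hc2a : 0 < β * β := mul_pos hβ0 hβ0
  have hc2b : β * β ≤ 1 := by nlinarith
  have hAA0 : 0 ≤ CEaux.AA N β := by
    have h1 : 0 ≤ ((N:ℝ)-1) := by linarith
    have : CEaux.AA N β = (N:ℝ)⁻¹ * (1 + ((N:ℝ)-1) * (1-β)^2) := rfl
    rw [this]
    have := sq_nonneg (1-β)
    positivity
  have hent_ub : entMN4 (CEaux.PP N β) ≤ (2*β - β^2) * Real.logb 2 (N:ℝ) + 3 := by
    rw [CEaux.entMN4_PP]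
    have h1 : -(CEaux.GG (CEaux.AA N β)) ≤ 3/4 := CEaux.neg_GG_le _ hAA0
    have hB : ((N:ℝ)-1) * (-(CEaux.GG (CEaux.BB N β)))
        ≤ (β*(1-β)) * Real.logb 2 (N:ℝ) + 3/4 := by
      have : CEaux.BB N β = (N:ℝ)⁻¹ * (β*(1-β)) := rfl
      rw [this]
      exact CEaux.GG_term (N:ℝ) (β*(1-β)) hn1 hc1a hc1b
    have hC : ((N:ℝ)-1) * (-(CEaux.GG (CEaux.CC N β)))
        ≤ (β*β) * Real.logb 2 (N:ℝ) + 3/4 := by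
      have : CEaux.CC N β = (N:ℝ)⁻¹ * (β*β) := rfl
      rw [this]
      exact CEaux.GG_term (N:ℝ) (β*β) hn1 hc2a hc2b
    nlinarith [hB, hC, h1]
  refine ⟨CEaux.PP N β, fun x y m n => CEaux.PP_nonneg N β hβ0.le hβ1.le x y m n, htot,
    ?_, ?_, ?_, ?_⟩
  · intro x y m n h
    simp [CEaux.PP, h]
  · intro x m n _
    rw [CEaux.margX4_eq, CEaux.margXM4_eq, CEaux.margXN4_eq]
    have hinv : ((N:ℝ))⁻¹ ≠ 0 := inv_ne_zero hn0.ne'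
    rw [mul_div_cancel_left₀ _ hinv, mul_div_cancel_left₀ _ hinv]
    simp only [CEaux.PP, eq_self_iff_true, if_true]
    ring
  · -- entropy bound with α
    have hβval : β = Real.sqrt α * (1-α) := by
      rw [hβdef, ← hαε, Real.sqrt_mul hα0.le, Real.sqrt_sq (by linarith : (0:ℝ) ≤ 1 - α)]
    have hs : Real.sqrt α ^ 2 = α := Real.sq_sqrt hα0.le
    have hs0 : 0 ≤ Real.sqrt α := Real.sqrt_nonneg α
    have h2β : 2*β - β^2 ≤ 1 - α^3 := by
      rw [hβval]
      exact CEaux.poly_ineq (Real.sqrt α) α hs0 hs hα1.le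
    calc entMN4 (CEaux.PP N β) ≤ (2*β - β^2) * Real.logb 2 (N:ℝ) + 3 := hent_ub
      _ ≤ (1 - α^3) * Real.logb 2 (N:ℝ) + 3 := by
          have := mul_le_mul_of_nonneg_right h2β hL0.le
          linarith
  · intro c' hsum
    have hββ : β * β = 2*ε := by nlinarith [hβsq]
    have hNle : (N:ℝ) ≤ (2:ℝ) ^ c' := by
      by_contra hcon
      push_neg at hcon
      have hpt : ∀ x y m n : Fin N,
          (if (margXM4 (CEaux.PP N β) x m / margX4 (CEaux.PP N β) x) *
              (margYN4 (CEaux.PP N β) y n / margY4 (CEaux.PP N β) y) /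
              margMN4 (CEaux.PP N β) m n ≤ (2 : ℝ) ^ c'
            then CEaux.PP N β x y m n else 0)
          ≤ CEaux.PP N β x y m n - CEaux.DD N β x y m n := by
        intro x y m n
        by_cases hsp : y = x ∧ m = x ∧ n = x ∧ ¬ x = 0
        · obtain ⟨hy, hm, hn2, hx0⟩ := hsp
          rw [hy, hm, hn2]
          have hqxx : CEaux.qq N β x x = β := by
            unfold CEaux.qq; rw [if_pos rfl, if_neg hx0, add_zero]
          have hr : (margXM4 (CEaux.PP N β) x x / margX4 (CEaux.PP N β) x) *
              (margYN4 (CEaux.PP N β) x x / margY4 (CEaux.PP N β) x) /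
              margMN4 (CEaux.PP N β) x x = (N:ℝ) := by
            rw [CEaux.margXM4_eq, CEaux.margX4_eq, CEaux.margYN4_eq, CEaux.margY4_eq,
              CEaux.margMN4_closed, if_neg hx0, if_neg hx0, if_pos rfl, hqxx]
            have : CEaux.CC N β = (N:ℝ)⁻¹ * (β*β) := rfl
            rw [this]
            field_simp
          rw [if_neg (by rw [hr]; exact not_le.2 hcon)]
          have hPPval : CEaux.PP N β x x x x = (N:ℝ)⁻¹ * (β*β) := by
            simp only [CEaux.PP, eq_self_iff_true, if_true, hqxx]
          have hDDval : CEaux.DD N β x x x x = (N:ℝ)⁻¹ * (β*β) := by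
            simp only [CEaux.DD, eq_self_iff_true, if_true, if_neg hx0]
          rw [hPPval, hDDval]
          linarith
        · have hDD : CEaux.DD N β x y m n = 0 := by
            unfold CEaux.DD
            split_ifs with h1 h2 h3 h4
            · rfl
            · exact absurd ⟨h1, h2, h3, h4⟩ hsp
            · rfl
            · rfl
            · rfl
          rw [hDD, sub_zero]
          split_ifs with h
          · exact le_refl _
          · exact CEaux.PP_nonneg N β hβ0.le hβ1.le x y m n
      have hsum2 : (∑ x, ∑ y, ∑ m, ∑ n,
          (if (margXM4 (CEaux.PP N β) x m / margX4 (CEaux.PP N β) x) *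
              (margYN4 (CEaux.PP N β) y n / margY4 (CEaux.PP N β) y) /
              margMN4 (CEaux.PP N β) m n ≤ (2 : ℝ) ^ c'
            then CEaux.PP N β x y m n else 0))
          ≤ ∑ x, ∑ y, ∑ m, ∑ n, (CEaux.PP N β x y m n - CEaux.DD N β x y m n) := by
        refine Finset.sum_le_sum fun x _ => Finset.sum_le_sum fun y _ =>
          Finset.sum_le_sum fun m _ => Finset.sum_le_sum fun n _ => hpt x y m n
      have hval : (∑ x, ∑ y, ∑ m, ∑ n, (CEaux.PP N β x y m n - CEaux.DD N β x y m n))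
          = 1 - ((N:ℝ)-1) * ((N:ℝ)⁻¹ * (β * β)) := by
        simp only [Finset.sum_sub_distrib]
        rw [htot, CEaux.sum_DD]
      rw [hval] at hsum2
      have hfin : 1 - ε ≤ 1 - ((N:ℝ)-1) * ((N:ℝ)⁻¹ * (2*ε)) := by
        rw [← hββ]; linarith
      have hinvle : (N:ℝ)⁻¹ ≤ 4⁻¹ := by
        rw [inv_le_inv₀ hn0 (by norm_num)]
        exact hn4
      have hninv : (N:ℝ) * (N:ℝ)⁻¹ = 1 := mul_inv_cancel₀ hn0.ne'
      nlinarith [hfin, hninv, hinvle, hε0, hn4, inv_nonneg.2 hn0.le]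
    have hc' : Real.logb 2 (N:ℝ) ≤ c' := by
      have h1 : Real.logb 2 (N:ℝ) ≤ Real.logb 2 ((2:ℝ) ^ c') :=
        Real.logb_le_logb_of_le (by norm_num) hn0 hNle
      rwa [Real.logb_rpow (by norm_num) (by norm_num)] at h1
    refine ⟨by linarith, ?_⟩
    have hc0 : 0 < c' := lt_of_lt_of_le hL0 hc'
    rw [div_le_iff₀ hc0]
    have h2b : 2*β ≤ 3 * Real.sqrt ε := by
      have hb2 : β = Real.sqrt 2 * Real.sqrt ε := by
        rw [hβdef, ← Real.sqrt_mul (by norm_num : (0:ℝ) ≤ 2) ε]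
      have hs2 : Real.sqrt 2 ^ 2 = 2 := Real.sq_sqrt (by norm_num)
      nlinarith [Real.sqrt_nonneg 2, Real.sqrt_nonneg ε, hs2, hsε]
    have h3L : 3 ≤ 4 * Real.sqrt ε * Real.logb 2 (N:ℝ) := by
      have hmul := mul_le_mul_of_nonneg_left hL1 (by positivity : (0:ℝ) ≤ 4 * Real.sqrt ε)
      have heq : 4 * Real.sqrt ε * (3 / (4 * Real.sqrt ε)) = 3 := by
        field_simp
      linarith
    have h7 : entMN4 (CEaux.PP N β) ≤ 7 * Real.sqrt ε * Real.logb 2 (N:ℝ) := by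
      have hβ2L : 0 ≤ β^2 * Real.logb 2 (N:ℝ) := by positivity
      nlinarith [hent_ub, mul_le_mul_of_nonneg_right h2b hL0.le, h3L, hβ2L]
    calc entMN4 (CEaux.PP N β) ≤ 7 * Real.sqrt ε * Real.logb 2 (N:ℝ) := h7
      _ ≤ 7 * Real.sqrt ε * c' := by
          have := mul_le_mul_of_nonneg_left hc' (by positivity : (0:ℝ) ≤ 7 * Real.sqrt ε)
          linarith


end
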